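/- For every mixed Nash equilibrium (σ¹*,σ²*) of the routing game (with p₁>α, p₂>1, under Assumption 1), every attack μ in the support of σ²* satisfies C₂(μ) ≤ Θ, the cost of attacking a minimum cut; moreover every edge (i,j) disrupted by such a μ is saturated (x*_{ij}=c_{ij}) by every maximum flow with minimum transportation cost x*. -/

import Mathlib

open scoped BigOperators Classical

/-- A capacitated network given by its finite edge set, capacities, per-unit
transportation costs, and the (edge sets of its) `s`-`t` paths and loops. -/
structure Network where
  E : Type
  fin : Fintype E
  dec : DecidableEq E
  /-- edge capacities -/
  c : E → ℝ
  /-- per-unit transportation costs -/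
  b : E → ℝ
  /-- the `s`-`t` paths, identified with their edge sets -/
  P : Finset (Finset E)
  /-- the loops, identified with their edge sets -/
  L : Finset (Finset E)
  c_nonneg : ∀ e, 0 ≤ c e
  b_nonneg : ∀ e, 0 ≤ b e
  P_nonempty : P.Nonempty
  P_edges_nonempty : ∀ p ∈ P, p.Nonempty

attribute [instance] Network.fin Network.dec

namespace Network

variable (N : Network)

/-- All paths and loops. -/
noncomputable def Lam : Finset (Finset N.E) := N.P ∪ N.L

/-- The flow through edge `e` induced by the path/loop flow `y`. -/
noncomputable def edgeFlow (y : Finset N.E → ℝ) (e : N.E) : ℝ :=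
  ∑ l ∈ N.Lam.filter (fun l => e ∈ l), y l

/-- Feasibility of a path/loop flow: nonnegative, supported on paths and loops,
and respecting edge capacities. -/
def Feasible (y : Finset N.E → ℝ) : Prop :=
  (∀ l, 0 ≤ y l) ∧ (∀ l, l ∉ N.Lam → y l = 0) ∧ (∀ e, N.edgeFlow y e ≤ N.c e)

/-- The value `F(x)` of the initial flow: total flow on `s`-`t` paths. -/
noncomputable def val (y : Finset N.E → ℝ) : ℝ := ∑ p ∈ N.P, y p

/-- The value `F(x^μ)` of the effective flow after the attack `μ`:
only the flow on paths avoiding all disrupted edges survives. -/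
noncomputable def effVal (y : Finset N.E → ℝ) (μ : Finset N.E) : ℝ :=
  ∑ p ∈ N.P.filter (fun p => Disjoint p μ), y p

/-- Transportation cost `C₁(x) = Σ b_e x_e`. -/
noncomputable def C1 (y : Finset N.E → ℝ) : ℝ := ∑ e, N.b e * N.edgeFlow y e

/-- Cost of an attack, `C₂(μ) = Σ_{e ∈ μ} c_e`. -/
noncomputable def C2 (μ : Finset N.E) : ℝ := ∑ e ∈ μ, N.c e

/-- Transportation cost of a path. -/
noncomputable def pathCost (p : Finset N.E) : ℝ := ∑ e ∈ p, N.b e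

/-- `α`: the minimum transportation cost over all `s`-`t` paths. -/
noncomputable def alpha : ℝ := sInf (N.pathCost '' ↑N.P)

/-- A cut: a set of edges meeting every `s`-`t` path. -/
def IsCut (K : Finset N.E) : Prop := ∀ p ∈ N.P, ¬ Disjoint p K

/-- A minimum cut: a cut of minimum capacity. -/
def IsMinCut (K : Finset N.E) : Prop := N.IsCut K ∧ ∀ K', N.IsCut K' → N.C2 K ≤ N.C2 K'

/-- `Θ`: the maximum flow value. -/
noncomputable def Theta : ℝ := sSup (N.val '' {y | N.Feasible y})

/-- A maximum flow. -/
def IsMaxFlow (y : Finset N.E → ℝ) : Prop :=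
  N.Feasible y ∧ ∀ z, N.Feasible z → N.val z ≤ N.val y

/-- A maximum flow with minimum transportation cost (an element of `Ω`). -/
def IsMFMC (y : Finset N.E → ℝ) : Prop :=
  N.IsMaxFlow y ∧ ∀ z, N.IsMaxFlow z → N.C1 y ≤ N.C1 z

/-- Assumption 1: `x` is a max-flow with minimum transportation cost all of whose
positively used `s`-`t` paths have transportation cost exactly `α`. -/
def Assumption1 (x : Finset N.E → ℝ) : Prop :=
  N.IsMFMC x ∧ ∀ p ∈ N.P, 0 < x p → N.pathCost p = N.alpha

/-- Defender's payoff `u₁(x,μ) = p₁ F(x^μ) - C₁(x)`. -/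
noncomputable def u1 (p1 : ℝ) (y : Finset N.E → ℝ) (μ : Finset N.E) : ℝ :=
  p1 * N.effVal y μ - N.C1 y

/-- Attacker's payoff `u₂(x,μ) = p₂ F(x - x^μ) - C₂(μ)`. -/
noncomputable def u2 (p2 : ℝ) (y : Finset N.E → ℝ) (μ : Finset N.E) : ℝ :=
  p2 * (N.val y - N.effVal y μ) - N.C2 μ

/-- The defender's action set: feasible flows. -/
def Flow : Type := {y : Finset N.E → ℝ // N.Feasible y}

/-- A (finitely supported) mixed strategy of the defender. -/
def MixedF (σ : N.Flow →₀ ℝ) : Prop := (∀ y, 0 ≤ σ y) ∧ (σ.sum fun _ w => w) = 1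

/-- A mixed strategy of the attacker. -/
def MixedA (σ : Finset N.E → ℝ) : Prop := (∀ μ, 0 ≤ σ μ) ∧ ∑ μ, σ μ = 1

/-- Expectation of a function of the flow under the defender's mixed strategy. -/
noncomputable def expF (σ : N.Flow →₀ ℝ) (g : (Finset N.E → ℝ) → ℝ) : ℝ :=
  σ.sum fun y w => w * g y.1

/-- Expectation of a function of the attack under the attacker's mixed strategy. -/
noncomputable def expA (σ : Finset N.E → ℝ) (h : Finset N.E → ℝ) : ℝ :=
  ∑ μ, σ μ * h μ

/-- Expectation of a function of both actions under a mixed strategy profile. -/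
noncomputable def expFA (σ1 : N.Flow →₀ ℝ) (σ2 : Finset N.E → ℝ)
    (g : (Finset N.E → ℝ) → Finset N.E → ℝ) : ℝ :=
  σ1.sum fun y w => w * ∑ μ, σ2 μ * g y.1 μ

/-- Defender's expected payoff. -/
noncomputable def U1 (p1 : ℝ) (σ1 : N.Flow →₀ ℝ) (σ2 : Finset N.E → ℝ) : ℝ :=
  N.expFA σ1 σ2 (N.u1 p1)

/-- Attacker's expected payoff. -/
noncomputable def U2 (p2 : ℝ) (σ1 : N.Flow →₀ ℝ) (σ2 : Finset N.E → ℝ) : ℝ :=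
  N.expFA σ1 σ2 (N.u2 p2)

/-- Mixed Nash equilibrium. -/
def IsNE (p1 p2 : ℝ) (σ1 : N.Flow →₀ ℝ) (σ2 : Finset N.E → ℝ) : Prop :=
  N.MixedF σ1 ∧ N.MixedA σ2 ∧
  (∀ τ1, N.MixedF τ1 → N.U1 p1 τ1 σ2 ≤ N.U1 p1 σ1 σ2) ∧
  (∀ τ2, N.MixedA τ2 → N.U2 p2 σ1 τ2 ≤ N.U2 p2 σ1 σ2)

/-- Pure Nash equilibrium. -/
def IsPureNE (p1 p2 : ℝ) (x : Finset N.E → ℝ) (μ : Finset N.E) : Prop :=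
  N.Feasible x ∧
  (∀ y, N.Feasible y → N.u1 p1 y μ ≤ N.u1 p1 x μ) ∧
  (∀ ν, N.u2 p2 x ν ≤ N.u2 p2 x μ)

end Network
namespace Network

open Finset

variable (N : Network)

lemma P_subset_Lam : N.P ⊆ N.Lam := by
  unfold Network.Lam; exact Finset.subset_union_left

lemma pathCost_nonneg (l : Finset N.E) : 0 ≤ N.pathCost l :=
  Finset.sum_nonneg fun e _ => N.b_nonneg e

lemma alpha_nonneg : 0 ≤ N.alpha := by
  apply Real.sInf_nonneg
  rintro x ⟨p, _, rfl⟩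
  exact N.pathCost_nonneg p

lemma alpha_le_pathCost {p : Finset N.E} (hp : p ∈ N.P) : N.alpha ≤ N.pathCost p := by
  refine csInf_le ⟨0, ?_⟩ ⟨p, hp, rfl⟩
  rintro x ⟨q, _, rfl⟩
  exact N.pathCost_nonneg q

lemma effVal_nonneg {y : Finset N.E → ℝ} (hy : ∀ l, 0 ≤ y l) (ν : Finset N.E) :
    0 ≤ N.effVal y ν :=
  Finset.sum_nonneg fun p _ => hy p

lemma effVal_empty (y : Finset N.E → ℝ) : N.effVal y ∅ = N.val y := by
  unfold Network.effVal Network.val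
  rw [Finset.filter_true_of_mem fun p _ => Finset.disjoint_empty_right p]

lemma effVal_cut {K : Finset N.E} (hK : N.IsCut K) (y : Finset N.E → ℝ) :
    N.effVal y K = 0 := by
  unfold Network.effVal
  rw [Finset.filter_eq_empty_iff.mpr fun {p} hp => hK p hp, Finset.sum_empty]

lemma C2_empty : N.C2 (∅ : Finset N.E) = 0 := Finset.sum_empty

lemma edgeFlow_nonneg {y : Finset N.E → ℝ} (hy : ∀ l, 0 ≤ y l) (e : N.E) :
    0 ≤ N.edgeFlow y e :=
  Finset.sum_nonneg fun l _ => hy l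

lemma sum_edgeFlow (y : Finset N.E → ℝ) (ν : Finset N.E) :
    ∑ f ∈ ν, N.edgeFlow y f
      = ∑ l ∈ N.Lam, ((ν.filter (fun f => f ∈ l)).card : ℝ) * y l := by
  unfold Network.edgeFlow
  calc ∑ f ∈ ν, ∑ l ∈ N.Lam.filter (fun l => f ∈ l), y l
      = ∑ f ∈ ν, ∑ l ∈ N.Lam, if f ∈ l then y l else 0 := by
        refine Finset.sum_congr rfl fun f _ => ?_
        rw [Finset.sum_filter]
    _ = ∑ l ∈ N.Lam, ∑ f ∈ ν, if f ∈ l then y l else 0 := Finset.sum_comm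
    _ = ∑ l ∈ N.Lam, ((ν.filter (fun f => f ∈ l)).card : ℝ) * y l := by
        refine Finset.sum_congr rfl fun l _ => ?_
        rw [← Finset.sum_filter, Finset.sum_const, nsmul_eq_mul]

lemma destroyed_le {y : Finset N.E → ℝ} (hy : ∀ l, 0 ≤ y l) (ν : Finset N.E) :
    N.val y - N.effVal y ν ≤ ∑ f ∈ ν, N.edgeFlow y f := by
  have hsplit : N.effVal y ν + ∑ p ∈ N.P.filter (fun p => ¬ Disjoint p ν), y p = N.val y :=
    Finset.sum_filter_add_sum_filter_not _ _ _
  have hsub : N.P.filter (fun p => ¬ Disjoint p ν) ⊆ N.Lam :=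
    (Finset.filter_subset _ _).trans (N.P_subset_Lam)
  have h1 : ∑ p ∈ N.P.filter (fun p => ¬ Disjoint p ν), y p
      ≤ ∑ p ∈ N.P.filter (fun p => ¬ Disjoint p ν),
          ((ν.filter (fun f => f ∈ p)).card : ℝ) * y p := by
    refine Finset.sum_le_sum fun p hp => ?_
    have hnd := (Finset.mem_filter.mp hp).2
    obtain ⟨a, hap, haν⟩ := Finset.not_disjoint_iff.mp hnd
    have hcard : 1 ≤ (ν.filter (fun f => f ∈ p)).card :=
      Finset.card_pos.mpr ⟨a, Finset.mem_filter.mpr ⟨haν, hap⟩⟩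
    have hcard' : (1 : ℝ) ≤ ((ν.filter (fun f => f ∈ p)).card : ℝ) := by
      exact_mod_cast hcard
    nlinarith [hy p]
  have h2 : ∑ p ∈ N.P.filter (fun p => ¬ Disjoint p ν),
      ((ν.filter (fun f => f ∈ p)).card : ℝ) * y p
      ≤ ∑ l ∈ N.Lam, ((ν.filter (fun f => f ∈ l)).card : ℝ) * y l :=
    Finset.sum_le_sum_of_subset_of_nonneg hsub
      (fun l _ _ => mul_nonneg (Nat.cast_nonneg _) (hy l))
  rw [sum_edgeFlow]
  linarith

lemma C1_eq (y : Finset N.E → ℝ) : N.C1 y = ∑ l ∈ N.Lam, N.pathCost l * y l := by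
  unfold Network.C1 Network.edgeFlow Network.pathCost
  calc ∑ e, N.b e * ∑ l ∈ N.Lam.filter (fun l => e ∈ l), y l
      = ∑ e, ∑ l ∈ N.Lam, if e ∈ l then N.b e * y l else 0 := by
        refine Finset.sum_congr rfl fun e _ => ?_
        rw [Finset.mul_sum, Finset.sum_filter]
    _ = ∑ l ∈ N.Lam, ∑ e, if e ∈ l then N.b e * y l else 0 := Finset.sum_comm
    _ = ∑ l ∈ N.Lam, (∑ e ∈ l, N.b e) * y l := by
        refine Finset.sum_congr rfl fun l _ => ?_
        rw [Finset.sum_ite_mem, Finset.univ_inter, Finset.sum_mul]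

lemma alpha_val_le_C1 {y : Finset N.E → ℝ} (hy : ∀ l, 0 ≤ y l) :
    N.alpha * N.val y ≤ N.C1 y := by
  rw [C1_eq]
  have h1 : ∑ p ∈ N.P, N.alpha * y p ≤ ∑ p ∈ N.P, N.pathCost p * y p :=
    Finset.sum_le_sum fun p hp => mul_le_mul_of_nonneg_right (N.alpha_le_pathCost hp) (hy p)
  have h2 : ∑ p ∈ N.P, N.pathCost p * y p ≤ ∑ l ∈ N.Lam, N.pathCost l * y l :=
    Finset.sum_le_sum_of_subset_of_nonneg N.P_subset_Lam
      (fun l _ _ => mul_nonneg (N.pathCost_nonneg l) (hy l))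
  have h3 : N.alpha * N.val y = ∑ p ∈ N.P, N.alpha * y p := by
    unfold Network.val; rw [Finset.mul_sum]
  linarith

lemma val_eq_theta {y : Finset N.E → ℝ} (h : N.IsMaxFlow y) : N.val y = N.Theta := by
  have hub : ∀ v ∈ N.val '' {z | N.Feasible z}, v ≤ N.val y := by
    rintro v ⟨z, hz, rfl⟩; exact h.2 z hz
  have hmem : N.val y ∈ N.val '' {z | N.Feasible z} := ⟨y, h.1, rfl⟩
  unfold Network.Theta
  exact le_antisymm (le_csSup ⟨N.val y, hub⟩ hmem) (csSup_le ⟨N.val y, hmem⟩ hub)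

lemma edgeFlow_smul (a : ℝ) (y : Finset N.E → ℝ) (e : N.E) :
    N.edgeFlow (fun l => a * y l) e = a * N.edgeFlow y e := by
  unfold Network.edgeFlow; rw [Finset.mul_sum]

lemma effVal_smul (a : ℝ) (y : Finset N.E → ℝ) (ν : Finset N.E) :
    N.effVal (fun l => a * y l) ν = a * N.effVal y ν := by
  unfold Network.effVal; rw [Finset.mul_sum]

lemma C1_smul (a : ℝ) (y : Finset N.E → ℝ) :
    N.C1 (fun l => a * y l) = a * N.C1 y := by
  unfold Network.C1
  rw [Finset.mul_sum]
  refine Finset.sum_congr rfl fun e _ => ?_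
  rw [edgeFlow_smul]; ring

lemma feasible_smul {y : Finset N.E → ℝ} (hy : N.Feasible y) {a : ℝ}
    (h0 : 0 ≤ a) (h1 : a ≤ 1) : N.Feasible (fun l => a * y l) := by
  refine ⟨fun l => mul_nonneg h0 (hy.1 l),
    fun l hl => by show a * y l = 0; rw [hy.2.1 l hl, mul_zero], fun e => ?_⟩
  rw [edgeFlow_smul]
  calc a * N.edgeFlow y e ≤ 1 * N.c e := by
        apply mul_le_mul h1 (hy.2.2 e) (N.edgeFlow_nonneg hy.1 e) zero_le_one
    _ = N.c e := one_mul _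

lemma C1_MFMC {x xs : Finset N.E → ℝ} (hx : N.Assumption1 x) (hxs : N.IsMFMC xs) :
    N.C1 xs = N.alpha * N.Theta := by
  have hC1eq : N.C1 xs = N.C1 x := le_antisymm (hxs.2 x hx.1.1) (hx.1.2 xs hxs.1)
  rw [hC1eq]
  have hnn := hx.1.1.1.1
  have hloop : ∀ l ∈ N.Lam, l ∉ N.P → N.pathCost l * x l = 0 := by
    intro l hl hlP
    by_cases hxl : x l = 0
    · rw [hxl, mul_zero]
    have hxlpos : 0 < x l := lt_of_le_of_ne (hnn l) (Ne.symm hxl)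
    have hcost : N.pathCost l ≤ 0 := by
      by_contra hc
      push_neg at hc
      set z := Function.update x l 0 with hz
      have hzle : ∀ m, z m ≤ x m := by
        intro m; by_cases hm : m = l
        · rw [hz, hm, Function.update_self]; exact hnn l
        · rw [hz, Function.update_of_ne hm]
      have hzfe : N.Feasible z := by
        refine ⟨?_, ?_, ?_⟩
        · intro m; by_cases hm : m = l
          · rw [hz, hm, Function.update_self]
          · rw [hz, Function.update_of_ne hm]; exact hnn m
        · intro m hm
          by_cases h' : m = l
          · rw [hz, h', Function.update_self]
          · rw [hz, Function.update_of_ne h']; exact hx.1.1.1.2.1 m hm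
        · intro e
          refine le_trans ?_ (hx.1.1.1.2.2 e)
          exact Finset.sum_le_sum fun m _ => hzle m
      have hzval : N.val z = N.val x := by
        refine Finset.sum_congr rfl fun p hp => ?_
        have hpl : p ≠ l := fun h => hlP (h ▸ hp)
        rw [hz, Function.update_of_ne hpl]
      have hzmax : N.IsMaxFlow z := ⟨hzfe, fun w hw => hzval ▸ hx.1.1.2 w hw⟩
      have hle := hx.1.2 z hzmax
      rw [C1_eq, C1_eq] at hle
      rw [Finset.sum_eq_sum_sdiff_singleton_add hl (fun m => N.pathCost m * x m),
        Finset.sum_eq_sum_sdiff_singleton_add hl (fun m => N.pathCost m * z m)] at hle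
      have hsame : ∑ m ∈ N.Lam \ {l}, N.pathCost m * x m
          = ∑ m ∈ N.Lam \ {l}, N.pathCost m * z m := by
        refine Finset.sum_congr rfl fun m hm => ?_
        have hml : m ≠ l := by
          intro h; exact (Finset.mem_sdiff.mp hm).2 (by simp [h])
        rw [hz, Function.update_of_ne hml]
      rw [hz, Function.update_self, mul_zero] at hle
      rw [hsame] at hle
      nlinarith
    have : N.pathCost l = 0 := le_antisymm hcost (N.pathCost_nonneg l)
    rw [this, zero_mul]
  rw [C1_eq]
  have hsd : ∑ l ∈ N.Lam \ N.P, N.pathCost l * x l + ∑ l ∈ N.P, N.pathCost l * x l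
      = ∑ l ∈ N.Lam, N.pathCost l * x l := Finset.sum_sdiff N.P_subset_Lam
  have hzero : ∑ l ∈ N.Lam \ N.P, N.pathCost l * x l = 0 := by
    refine Finset.sum_eq_zero fun l hl => ?_
    have hm := Finset.mem_sdiff.mp hl
    exact hloop l hm.1 hm.2
  have hPsum : ∑ l ∈ N.P, N.pathCost l * x l = N.alpha * N.val x := by
    unfold Network.val
    rw [Finset.mul_sum]
    refine Finset.sum_congr rfl fun p hp => ?_
    by_cases hxp : x p = 0
    · rw [hxp, mul_zero, mul_zero]
    · have : 0 < x p := lt_of_le_of_ne (hnn p) (Ne.symm hxp)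
      rw [hx.2 p hp this]
  rw [← hsd, hzero, hPsum, zero_add, val_eq_theta N hx.1.1]

noncomputable def barFlow (σ1 : N.Flow →₀ ℝ) : Finset N.E → ℝ :=
  fun l => σ1.sum fun y w => w * y.1 l

lemma bar_sum (σ1 : N.Flow →₀ ℝ) (T : Finset (Finset N.E)) (coef : Finset N.E → ℝ) :
    ∑ l ∈ T, coef l * N.barFlow σ1 l = σ1.sum fun y w => w * ∑ l ∈ T, coef l * y.1 l := by
  unfold Network.barFlow
  simp only [Finsupp.sum, Finset.mul_sum]
  rw [Finset.sum_comm]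
  exact Finset.sum_congr rfl fun y _ => Finset.sum_congr rfl fun l _ => by ring

lemma bar_val (σ1 : N.Flow →₀ ℝ) :
    N.val (N.barFlow σ1) = σ1.sum fun y w => w * N.val y.1 := by
  have h := N.bar_sum σ1 N.P (fun _ => 1)
  simp only [one_mul] at h
  simp only [Network.val]
  exact h

lemma bar_effVal (σ1 : N.Flow →₀ ℝ) (ν : Finset N.E) :
    N.effVal (N.barFlow σ1) ν = σ1.sum fun y w => w * N.effVal y.1 ν := by
  have h := N.bar_sum σ1 (N.P.filter (fun p => Disjoint p ν)) (fun _ => 1)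
  simp only [one_mul] at h
  simp only [Network.effVal]
  exact h

lemma bar_edgeFlow (σ1 : N.Flow →₀ ℝ) (e : N.E) :
    N.edgeFlow (N.barFlow σ1) e = σ1.sum fun y w => w * N.edgeFlow y.1 e := by
  have h := N.bar_sum σ1 (N.Lam.filter (fun l => e ∈ l)) (fun _ => 1)
  simp only [one_mul] at h
  simp only [Network.edgeFlow]
  exact h

lemma bar_C1 (σ1 : N.Flow →₀ ℝ) :
    N.C1 (N.barFlow σ1) = σ1.sum fun y w => w * N.C1 y.1 := by
  rw [C1_eq, bar_sum]
  exact Finsupp.sum_congr fun y _ => by rw [C1_eq]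

lemma bar_feasible {σ1 : N.Flow →₀ ℝ} (h : N.MixedF σ1) : N.Feasible (N.barFlow σ1) := by
  have hw1 : ∑ y ∈ σ1.support, σ1 y = 1 := h.2
  refine ⟨?_, ?_, ?_⟩
  · intro l
    exact Finset.sum_nonneg fun y _ => mul_nonneg (h.1 y) (y.2.1 l)
  · intro l hl
    refine Finset.sum_eq_zero fun y _ => ?_
    show σ1 y * y.1 l = 0
    rw [y.2.2.1 l hl, mul_zero]
  · intro e
    rw [bar_edgeFlow]
    calc σ1.sum (fun y w => w * N.edgeFlow y.1 e)
        ≤ ∑ y ∈ σ1.support, σ1 y * N.c e :=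
          Finset.sum_le_sum fun y _ => mul_le_mul_of_nonneg_left (y.2.2.2 e) (h.1 y)
      _ = N.c e := by rw [← Finset.sum_mul, hw1, one_mul]

lemma sum_u2 {σ1 : N.Flow →₀ ℝ} (h : N.MixedF σ1) (p2 : ℝ) (ν : Finset N.E) :
    σ1.sum (fun y w => w * N.u2 p2 y.1 ν)
      = p2 * (N.val (N.barFlow σ1) - N.effVal (N.barFlow σ1) ν) - N.C2 ν := by
  have hw1 : ∑ y ∈ σ1.support, σ1 y = 1 := h.2
  rw [bar_val, bar_effVal]
  simp only [Network.u2, Finsupp.sum]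
  have e1 : ∑ y ∈ σ1.support, σ1 y * (p2 * (N.val y.1 - N.effVal y.1 ν) - N.C2 ν)
      = ∑ y ∈ σ1.support,
          (p2 * (σ1 y * N.val y.1) - p2 * (σ1 y * N.effVal y.1 ν) - σ1 y * N.C2 ν) :=
    Finset.sum_congr rfl fun y _ => by ring
  rw [e1, Finset.sum_sub_distrib, Finset.sum_sub_distrib, ← Finset.mul_sum, ← Finset.mul_sum,
    ← Finset.sum_mul, hw1, one_mul]
  ring

lemma sum_u1 (σ1 : N.Flow →₀ ℝ) (p1 : ℝ) (ν : Finset N.E) :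
    σ1.sum (fun y w => w * N.u1 p1 y.1 ν)
      = p1 * N.effVal (N.barFlow σ1) ν - N.C1 (N.barFlow σ1) := by
  rw [bar_effVal, bar_C1]
  simp only [Network.u1, Finsupp.sum]
  have e1 : ∑ y ∈ σ1.support, σ1 y * (p1 * N.effVal y.1 ν - N.C1 y.1)
      = ∑ y ∈ σ1.support, (p1 * (σ1 y * N.effVal y.1 ν) - σ1 y * N.C1 y.1) :=
    Finset.sum_congr rfl fun y _ => by ring
  rw [e1, Finset.sum_sub_distrib, ← Finset.mul_sum]

lemma U2_eq {σ1 : N.Flow →₀ ℝ} (h : N.MixedF σ1) (p2 : ℝ) (τ2 : Finset N.E → ℝ) :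
    N.U2 p2 σ1 τ2
      = ∑ ν, τ2 ν * (p2 * (N.val (N.barFlow σ1) - N.effVal (N.barFlow σ1) ν) - N.C2 ν) := by
  unfold Network.U2 Network.expFA
  simp only [Finsupp.sum]
  calc ∑ y ∈ σ1.support, σ1 y * ∑ ν, τ2 ν * N.u2 p2 y.1 ν
      = ∑ y ∈ σ1.support, ∑ ν, τ2 ν * (σ1 y * N.u2 p2 y.1 ν) := by
        refine Finset.sum_congr rfl fun y _ => ?_
        rw [Finset.mul_sum]
        exact Finset.sum_congr rfl fun ν _ => by ring
    _ = ∑ ν, ∑ y ∈ σ1.support, τ2 ν * (σ1 y * N.u2 p2 y.1 ν) := Finset.sum_comm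
    _ = ∑ ν, τ2 ν * ∑ y ∈ σ1.support, σ1 y * N.u2 p2 y.1 ν := by
        refine Finset.sum_congr rfl fun ν _ => ?_
        rw [Finset.mul_sum]
    _ = _ := by
        refine Finset.sum_congr rfl fun ν _ => ?_
        have h2 := N.sum_u2 h p2 ν
        simp only [Finsupp.sum] at h2
        rw [h2]

lemma U1_eq {σ1 : N.Flow →₀ ℝ} {σ2 : Finset N.E → ℝ} (h1 : N.MixedF σ1)
    (h2 : ∑ ν, σ2 ν = 1) (p1 : ℝ) :
    N.U1 p1 σ1 σ2
      = p1 * (∑ ν, σ2 ν * N.effVal (N.barFlow σ1) ν) - N.C1 (N.barFlow σ1) := by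
  unfold Network.U1 Network.expFA
  simp only [Finsupp.sum]
  calc ∑ y ∈ σ1.support, σ1 y * ∑ ν, σ2 ν * N.u1 p1 y.1 ν
      = ∑ y ∈ σ1.support, ∑ ν, σ2 ν * (σ1 y * N.u1 p1 y.1 ν) := by
        refine Finset.sum_congr rfl fun y _ => ?_
        rw [Finset.mul_sum]
        exact Finset.sum_congr rfl fun ν _ => by ring
    _ = ∑ ν, ∑ y ∈ σ1.support, σ2 ν * (σ1 y * N.u1 p1 y.1 ν) := Finset.sum_comm
    _ = ∑ ν, σ2 ν * ∑ y ∈ σ1.support, σ1 y * N.u1 p1 y.1 ν := by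
        refine Finset.sum_congr rfl fun ν _ => ?_
        rw [Finset.mul_sum]
    _ = ∑ ν, σ2 ν * (p1 * N.effVal (N.barFlow σ1) ν - N.C1 (N.barFlow σ1)) := by
        refine Finset.sum_congr rfl fun ν _ => ?_
        have h3 := N.sum_u1 σ1 p1 ν
        simp only [Finsupp.sum] at h3
        rw [h3]
    _ = _ := by
        have e1 : ∑ ν, σ2 ν * (p1 * N.effVal (N.barFlow σ1) ν - N.C1 (N.barFlow σ1))
            = ∑ ν, (p1 * (σ2 ν * N.effVal (N.barFlow σ1) ν) - σ2 ν * N.C1 (N.barFlow σ1)) :=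
          Finset.sum_congr rfl fun ν _ => by ring
        rw [e1, Finset.sum_sub_distrib, ← Finset.mul_sum, ← Finset.sum_mul, h2, one_mul]

lemma mixedF_single (z : N.Flow) : N.MixedF (Finsupp.single z 1) := by
  constructor
  · intro y
    rw [Finsupp.single_apply]
    split_ifs <;> norm_num
  · rw [Finsupp.sum_single_index]
    rfl

lemma mixedA_single (ν0 : Finset N.E) : N.MixedA (fun ν => if ν = ν0 then 1 else 0) := by
  constructor
  · intro ν
    show (0:ℝ) ≤ if ν = ν0 then 1 else 0
    split_ifs <;> norm_num
  · simp

lemma U1_single (v : Finset N.E → ℝ) (hv : N.Feasible v) {σ2 : Finset N.E → ℝ}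
    (h2 : ∑ ν, σ2 ν = 1) (p1 : ℝ) :
    N.U1 p1 (Finsupp.single (⟨v, hv⟩ : N.Flow) 1) σ2
      = p1 * (∑ ν, σ2 ν * N.effVal v ν) - N.C1 v := by
  unfold Network.U1 Network.expFA
  have hs := Finsupp.sum_single_index (a := (⟨v, hv⟩ : N.Flow)) (b := (1:ℝ))
    (h := fun y w => w * ∑ μ, σ2 μ * N.u1 p1 y.1 μ) (by rw [zero_mul])
  refine hs.trans ?_
  rw [one_mul]
  simp only [Network.u1]
  have e1 : ∑ ν, σ2 ν * (p1 * N.effVal v ν - N.C1 v)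
      = ∑ ν, (p1 * (σ2 ν * N.effVal v ν) - σ2 ν * N.C1 v) :=
    Finset.sum_congr rfl fun ν _ => by ring
  rw [e1, Finset.sum_sub_distrib, ← Finset.mul_sum, ← Finset.sum_mul, h2, one_mul]

end Network

/-- at every mixed Nash equilibrium (with `p₁ > α`, `p₂ > 1`, Assumption 1),
every attack `μ` in the support of `σ²*` has cost `C₂(μ) ≤ Θ` (the cost of attacking a
minimum cut), and every edge disrupted by such a `μ` is saturated by every maximum flow
with minimum transportation cost. -/
theorem equilibrium_attacks_bounded_and_saturated (N : Network) (p1 p2 : ℝ)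
    (hp1 : N.alpha < p1) (hp2 : 1 < p2)
    (hA1 : ∃ x, N.Assumption1 x)
    (hMFMC : ∃ K, N.IsMinCut K ∧ N.C2 K = N.Theta)
    (σ1 : N.Flow →₀ ℝ) (σ2 : Finset N.E → ℝ)
    (hNE : N.IsNE p1 p2 σ1 σ2) :
    ∀ μ, σ2 μ ≠ 0 →
      N.C2 μ ≤ N.Theta ∧
      ∀ e ∈ μ, ∀ xs, N.IsMFMC xs → N.edgeFlow xs e = N.c e := by
  classical
  obtain ⟨xstar, hxstar⟩ := hA1
  obtain ⟨K, hK, hKTheta⟩ := hMFMC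
  obtain ⟨hσ1, hσ2, hD, hAtt⟩ := hNE
  set xb := N.barFlow σ1 with hxbdef
  have hxbfe : N.Feasible xb := N.bar_feasible hσ1
  set H : Finset N.E → ℝ :=
    fun ν => p2 * (N.val xb - N.effVal xb ν) - N.C2 ν with hHdef
  have hU2 : ∀ τ2, N.U2 p2 σ1 τ2 = ∑ ν, τ2 ν * H ν := fun τ2 => N.U2_eq hσ1 p2 τ2
  have hHle : ∀ ν, H ν ≤ ∑ ν', σ2 ν' * H ν' := by
    intro ν
    have h := hAtt (fun ν' => if ν' = ν then 1 else 0) (N.mixedA_single ν)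
    rw [hU2, hU2] at h
    have e1 : ∑ ν', (if ν' = ν then (1:ℝ) else 0) * H ν' = H ν := by
      rw [Finset.sum_congr rfl (fun ν' _ => ite_mul (ν' = ν) (1:ℝ) 0 (H ν'))]
      simp only [one_mul, zero_mul]
      rw [Finset.sum_ite_eq' Finset.univ ν H]
      simp
    rwa [e1] at h
  have hsupp : ∀ ν, σ2 ν ≠ 0 → H ν = ∑ ν', σ2 ν' * H ν' := by
    intro ν hν
    have hzero : ∑ ν', σ2 ν' * ((∑ ν'', σ2 ν'' * H ν'') - H ν') = 0 := by
      have e2 : ∑ ν', σ2 ν' * ((∑ ν'', σ2 ν'' * H ν'') - H ν')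
          = ∑ ν', (σ2 ν' * (∑ ν'', σ2 ν'' * H ν'') - σ2 ν' * H ν') :=
        Finset.sum_congr rfl fun ν' _ => by ring
      rw [e2, Finset.sum_sub_distrib, ← Finset.sum_mul, hσ2.2, one_mul, sub_self]
    have hterm := (Finset.sum_eq_zero_iff_of_nonneg
      (fun ν' _ => mul_nonneg (hσ2.1 ν') (sub_nonneg.mpr (hHle ν')))).mp hzero ν
      (Finset.mem_univ ν)
    rcases mul_eq_zero.mp hterm with h | h
    · exact absurd h hν
    · linarith [sub_eq_zero.mp h]
  intro μ0 hμ0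
  have hφmin : ∀ ν, N.C2 μ0 + p2 * N.effVal xb μ0 ≤ N.C2 ν + p2 * N.effVal xb ν := by
    intro ν
    have h1 := hHle ν
    have h2 := hsupp μ0 hμ0
    rw [← h2] at h1
    simp only [hHdef] at h1
    linarith
  set m := N.C2 μ0 + p2 * N.effVal xb μ0 with hmdef
  have hmθ : m ≤ N.Theta := by
    have h := hφmin K
    rw [N.effVal_cut hK.1 xb] at h
    rw [hKTheta] at h
    linarith
  have hmval : m ≤ p2 * N.val xb := by
    have h := hφmin ∅
    rw [N.effVal_empty xb, N.C2_empty] at h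
    linarith
  have hsuppφ : ∀ ν, σ2 ν ≠ 0 → N.C2 ν + p2 * N.effVal xb ν = m := by
    intro ν hν
    have h2 := hsupp ν hν
    have h3 := hsupp μ0 hμ0
    rw [← h3] at h2
    simp only [hHdef] at h2
    rw [hmdef]
    linarith
  have hagg : ∑ ν, σ2 ν * (N.C2 ν + p2 * N.effVal xb ν) = m := by
    have e3 : ∑ ν, σ2 ν * (N.C2 ν + p2 * N.effVal xb ν) = ∑ ν, σ2 ν * m := by
      refine Finset.sum_congr rfl fun ν _ => ?_
      by_cases h : σ2 ν = 0
      · rw [h, zero_mul, zero_mul]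
      · rw [hsuppφ ν h]
    rw [e3, ← Finset.sum_mul, hσ2.2, one_mul]
  have hα0 := N.alpha_nonneg
  have hαval : N.alpha * N.val xb ≤ N.C1 xb := N.alpha_val_le_C1 hxbfe.1
  have hp2pos : (0:ℝ) < p2 := by linarith
  have hp2ne : p2 ≠ 0 := ne_of_gt hp2pos
  have hp1pos : (0:ℝ) < p1 := lt_of_le_of_lt hα0 hp1
  -- key step: for every MFMC xs, effVal xs μ0 = Θ - C2 μ0
  have key : ∀ xs, N.IsMFMC xs → N.effVal xs μ0 = N.Theta - N.C2 μ0 := by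
    intro xs hxs
    have hxsfe : N.Feasible xs := hxs.1.1
    have hvalxs : N.val xs = N.Theta := N.val_eq_theta hxs.1
    have hC1xs : N.C1 xs = N.alpha * N.Theta := N.C1_MFMC hxstar hxs
    have hammel : (0:ℝ) ≤ 1 / p2 := by positivity
    have ha1 : 1 / p2 ≤ 1 := by
      rw [div_le_one hp2pos]; linarith
    have hzfe : N.Feasible (fun l => (1 / p2) * xs l) := N.feasible_smul hxsfe hammel ha1
    have hdev := hD (Finsupp.single (⟨fun l => (1 / p2) * xs l, hzfe⟩ : N.Flow) 1)
      (N.mixedF_single _)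
    rw [N.U1_single _ hzfe hσ2.2 p1, N.U1_eq hσ1 hσ2.2 p1] at hdev
    have hEs : ∑ ν, σ2 ν * N.effVal (fun l => (1 / p2) * xs l) ν
        = (1 / p2) * ∑ ν, σ2 ν * N.effVal xs ν := by
      rw [Finset.mul_sum]
      refine Finset.sum_congr rfl fun ν _ => ?_
      rw [N.effVal_smul]; ring
    rw [hEs, N.C1_smul, hC1xs] at hdev
    -- abbreviations
    set Abar := ∑ ν, σ2 ν * N.effVal xb ν with hAdef
    set Cbar := ∑ ν, σ2 ν * N.C2 ν with hCdef
    set Ebar := ∑ ν, σ2 ν * N.effVal xs ν with hEdef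
    -- hdev : p1 * ((1/p2) * Ebar) - (1/p2) * (α * Θ) ≤ p1 * Abar - C1 xb
    have h3 : Cbar + p2 * Abar = m := by
      have e4 : ∑ ν, σ2 ν * (N.C2 ν + p2 * N.effVal xb ν) = Cbar + p2 * Abar := by
        rw [hCdef, hAdef, Finset.mul_sum, ← Finset.sum_add_distrib]
        exact Finset.sum_congr rfl fun ν _ => by ring
      rw [← e4, hagg]
    have h6 : ∀ ν, N.Theta - N.C2 ν ≤ N.effVal xs ν := by
      intro ν
      have hd := N.destroyed_le hxsfe.1 ν
      have hc : ∑ f ∈ ν, N.edgeFlow xs f ≤ N.C2 ν :=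
        Finset.sum_le_sum fun f _ => hxsfe.2.2 f
      rw [hvalxs] at hd
      linarith
    set ebar := ∑ ν, σ2 ν * (N.effVal xs ν - (N.Theta - N.C2 ν)) with hedef
    have hebar_terms : ∀ ν ∈ Finset.univ, 0 ≤ σ2 ν * (N.effVal xs ν - (N.Theta - N.C2 ν)) :=
      fun ν _ => mul_nonneg (hσ2.1 ν) (sub_nonneg.mpr (h6 ν))
    have hEbar : Ebar = N.Theta - Cbar + ebar := by
      have e5 : ebar = Ebar - (∑ ν, σ2 ν) * N.Theta + Cbar := by
        rw [hedef, hEdef, hCdef, Finset.sum_mul]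
        rw [← Finset.sum_sub_distrib, ← Finset.sum_add_distrib]
        exact Finset.sum_congr rfl fun ν _ => by ring
      rw [e5, hσ2.2, one_mul]; ring
    -- final arithmetic: derive ebar ≤ 0
    have hdev2 : p1 * Ebar - N.alpha * N.Theta ≤ p2 * (p1 * Abar - N.C1 xb) := by
      have h := mul_le_mul_of_nonneg_left hdev hp2pos.le
      have e6 : p2 * (p1 * (1 / p2 * Ebar) - 1 / p2 * (N.alpha * N.Theta))
          = p1 * Ebar - N.alpha * N.Theta := by
        field_simp
      linarith [e6 ▸ h]
    have e7 : p2 * (p1 * Abar - N.C1 xb) = p1 * (m - Cbar) - p2 * N.C1 xb := by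
      have : p2 * Abar = m - Cbar := by linarith
      calc p2 * (p1 * Abar - N.C1 xb) = p1 * (p2 * Abar) - p2 * N.C1 xb := by ring
        _ = p1 * (m - Cbar) - p2 * N.C1 xb := by rw [this]
    have e8 : N.alpha * m ≤ p2 * N.C1 xb := by
      calc N.alpha * m ≤ N.alpha * (p2 * N.val xb) := mul_le_mul_of_nonneg_left hmval hα0
        _ = p2 * (N.alpha * N.val xb) := by ring
        _ ≤ p2 * N.C1 xb := mul_le_mul_of_nonneg_left hαval hp2pos.le
    have e9 : p1 * Ebar = p1 * N.Theta - p1 * Cbar + p1 * ebar := by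
      rw [hEbar]; ring
    have e10 : 0 ≤ (p1 - N.alpha) * (N.Theta - m) :=
      mul_nonneg (by linarith) (by linarith)
    have hebarle : ebar ≤ 0 := by nlinarith [hdev2, e7, e8, e9, e10]
    have hebar0 : ebar = 0 := le_antisymm hebarle (Finset.sum_nonneg hebar_terms)
    have hterm0 := (Finset.sum_eq_zero_iff_of_nonneg hebar_terms).mp hebar0 μ0
      (Finset.mem_univ μ0)
    rcases mul_eq_zero.mp hterm0 with h | h
    · exact absurd h hμ0
    · linarith [sub_eq_zero.mp h]
  constructor
  · have hk := key xstar hxstar.1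
    have hnn := N.effVal_nonneg hxstar.1.1.1.1 μ0
    linarith
  · intro e he xs hxs
    have hk := key xs hxs
    have hd := N.destroyed_le hxs.1.1.1 μ0
    rw [N.val_eq_theta hxs.1, hk] at hd
    have hub : ∀ f ∈ μ0, N.edgeFlow xs f ≤ N.c f := fun f _ => hxs.1.1.2.2 f
    have hsum : ∑ f ∈ μ0, N.edgeFlow xs f = ∑ f ∈ μ0, N.c f := by
      refine le_antisymm (Finset.sum_le_sum hub) ?_
      have : N.C2 μ0 = ∑ f ∈ μ0, N.c f := rfl
      linarith [hd]
    exact (Finset.sum_eq_sum_iff_of_le hub).mp hsum e he
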